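/- Let C be a symmetric monoidal stable (or tensor-triangulated) category with unit 𝟙, let τ : T → 𝟙 be a morphism from an ⊗-invertible object T, and let R = cofib(τ) with its projection map R → ΣT. If M is an object admitting a unital multiplication by R in the homotopy category (i.e. a left homotopy R-module, so in particular the unit 𝟙 → R induces a map M → R ⊗ M split by an action map R ⊗ M → M), then the map τ ⊗ M : T ⊗ M → M is zero. Consequently there is an isomorphism R ⊗ M ≅ M ⊕ (ΣT ⊗ M). -/

import Mathlib

open CategoryTheory CategoryTheory.Limits CategoryTheory.Pretriangulated
  CategoryTheory.MonoidalCategory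

/-- Let `τ : T → 𝟙` be a map from a `⊗`-invertible object in a tensor-triangulated category,
with cofiber triangle `T --τ--> 𝟙 --u--> R --δ--> ΣT`.  If `M` carries a unital left homotopy
`R`-module structure `α : R ⊗ M → M` (so that `M → R ⊗ M` induced by the unit is split by
`α`), then `τ ⊗ M : T ⊗ M → M` is zero, and consequently `R ⊗ M ≅ M ⊕ (ΣT ⊗ M)`.
(The compatibility of the tensor with the triangulation is encoded by the hypothesis `hTM`
that the tensored triangle is distinguished.) -/
theorem stmt14 {C : Type*} [Category C] [HasZeroObject C] [HasShift C ℤ] [Preadditive C]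
    [∀ n : ℤ, (shiftFunctor C n).Additive] [Pretriangulated C]
    [MonoidalCategory C] [HasBinaryBiproducts C]
    {T R M : C} (τ : T ⟶ 𝟙_ C) (u : 𝟙_ C ⟶ R) (δ : R ⟶ T⟦(1 : ℤ)⟧)
    (hτ : Triangle.mk τ u δ ∈ distTriang C)
    (hinv : ∃ T' : C, Nonempty (T ⊗ T' ≅ 𝟙_ C))
    (α : R ⊗ M ⟶ M) (hα : (λ_ M).inv ≫ (u ▷ M) ≫ α = 𝟙 M)
    (e : T⟦(1 : ℤ)⟧ ⊗ M ≅ (T ⊗ M)⟦(1 : ℤ)⟧)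
    (hTM : Triangle.mk ((τ ▷ M) ≫ (λ_ M).hom) ((λ_ M).inv ≫ (u ▷ M)) ((δ ▷ M) ≫ e.hom)
      ∈ distTriang C) :
    (τ ▷ M) ≫ (λ_ M).hom = 0 ∧ Nonempty (R ⊗ M ≅ M ⊞ (T⟦(1 : ℤ)⟧ ⊗ M)) := by
  have hfg : ((τ ▷ M) ≫ (λ_ M).hom) ≫ ((λ_ M).inv ≫ (u ▷ M)) = 0 :=
    comp_distTriang_mor_zero₁₂ _ hTM
  have hf : (τ ▷ M) ≫ (λ_ M).hom = 0 := by
    calc (τ ▷ M) ≫ (λ_ M).hom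
        = ((τ ▷ M) ≫ (λ_ M).hom) ≫ ((λ_ M).inv ≫ (u ▷ M) ≫ α) := by
          conv_lhs => rw [← Category.comp_id ((τ ▷ M) ≫ (λ_ M).hom), ← hα]
      _ = (((τ ▷ M) ≫ (λ_ M).hom) ≫ ((λ_ M).inv ≫ (u ▷ M))) ≫ α := by
          simp only [Category.assoc]
      _ = 0 := by rw [hfg, zero_comp]
  refine ⟨hf, ?_⟩
  have hrot := rot_of_distTriang _ hTM
  have hzero : (Triangle.mk ((τ ▷ M) ≫ (λ_ M).hom) ((λ_ M).inv ≫ (u ▷ M))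
      ((δ ▷ M) ≫ e.hom)).rotate.mor₃ = 0 := by
    dsimp [Triangle.rotate]
    simp only [Triangle.mk_mor₃, Triangle.mk_mor₁, hf]
    exact neg_eq_zero.mpr (Functor.map_zero _ _ _)
  obtain ⟨e', _, _⟩ := exists_iso_binaryBiproduct_of_distTriang _ hrot hzero
  exact ⟨e' ≪≫ biprod.mapIso (Iso.refl M) e.symm⟩
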